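/- If T, S admit A-adjoints, TS = ST, and α ∈ [0,1), then ‖TS‖_{A,α} ≤ sqrt(4α + 1/(1−α)) · ‖T‖_{A,α} ‖S‖_{A,α}. -/

import Mathlib

open scoped ComplexOrder
open ContinuousLinearMap Filter Topology

variable {H : Type*} [NormedAddCommGroup H] [InnerProductSpace ℂ H] [CompleteSpace H]

/-- The A-semi-inner product `⟨x, y⟩_A = ⟨A x, y⟩` (Mathlib convention: conjugate
linear in the first variable). -/
noncomputable def aInner (A : H →L[ℂ] H) (x y : H) : ℂ := inner ℂ (A x) y

/-- The A-seminorm `‖x‖_A = sqrt ⟨x, x⟩_A`. -/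
noncomputable def aNorm (A : H →L[ℂ] H) (x : H) : ℝ := Real.sqrt (aInner A x x).re

/-- `T` is A-bounded. -/
def ABounded (A T : H →L[ℂ] H) : Prop := ∃ c > 0, ∀ x, aNorm A (T x) ≤ c * aNorm A x

/-- The A-operator seminorm. -/
noncomputable def opNormA (A T : H →L[ℂ] H) : ℝ :=
  sSup {r | ∃ x ∈ closure (Set.range A), aNorm A x = 1 ∧ r = aNorm A (T x)}

/-- The A-numerical radius. -/
noncomputable def wA (A T : H →L[ℂ] H) : ℝ :=
  sSup {r | ∃ x, aNorm A x = 1 ∧ r = ‖aInner A (T x) x‖}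

/-- The A-Crawford number. -/
noncomputable def cA (A T : H →L[ℂ] H) : ℝ :=
  sInf {r | ∃ x, aNorm A x = 1 ∧ r = ‖aInner A (T x) x‖}

/-- The `A_α`-seminorm `‖T‖_{A,α}`. -/
noncomputable def alphaNorm (A T : H →L[ℂ] H) (α : ℝ) : ℝ :=
  sSup {r | ∃ x, aNorm A x = 1 ∧
    r = Real.sqrt (α * ‖aInner A (T x) x‖ ^ 2 + (1 - α) * aNorm A (T x) ^ 2)}

/-- `S` is the A-adjoint `T^{♯_A}` of `T`: the solution of `A X = T* A` whose
range lies in the closure of the range of `A`. -/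
def IsAAdjoint (A T S : H →L[ℂ] H) : Prop :=
  A ∘L S = (ContinuousLinearMap.adjoint T) ∘L A ∧ ∀ x, S x ∈ closure (Set.range A)


section basic

variable {A : H →L[ℂ] H}

lemma aInner_conj (hA : A.IsPositive) (x y : H) :
    aInner A y x = starRingEnd ℂ (aInner A x y) := by
  show (inner ℂ (A y) x : ℂ) = starRingEnd ℂ (inner ℂ (A x) y)
  rw [inner_conj_symm y (A x), ← adjoint_inner_left, hA.isSelfAdjoint.adjoint_eq]

lemma aInner_re_nonneg (hA : A.IsPositive) (x : H) : 0 ≤ (aInner A x x).re :=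
  hA.re_inner_nonneg_left x

lemma aNorm_nonneg (x : H) : 0 ≤ aNorm A x := Real.sqrt_nonneg _

lemma aNorm_sq (hA : A.IsPositive) (x : H) : aNorm A x ^ 2 = (aInner A x x).re :=
  Real.sq_sqrt (aInner_re_nonneg hA x)

/-- The semi-inner-product core structure associated to a positive operator. -/
noncomputable def aCore (hA : A.IsPositive) : PreInnerProductSpace.Core ℂ H where
  inner := aInner A
  conj_inner_symm x y := (aInner_conj hA y x).symm
  re_inner_nonneg x := aInner_re_nonneg hA x
  add_left x y z := by
    show aInner A (x + y) z = aInner A x z + aInner A y z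
    unfold aInner; rw [map_add, inner_add_left]
  smul_left x y r := by
    show aInner A (r • x) y = starRingEnd ℂ r * aInner A x y
    unfold aInner; rw [map_smul, inner_smul_left]

lemma aInner_abs_le (hA : A.IsPositive) (x y : H) :
    ‖aInner A x y‖ ≤ aNorm A x * aNorm A y := by
  have h2 : ‖aInner A x y‖ * ‖aInner A y x‖ ≤ (aInner A x x).re * (aInner A y y).re :=
    @InnerProductSpace.Core.inner_mul_inner_self_le ℂ H _ _ _ (aCore hA) x y
  have hnn : ‖aInner A y x‖ = ‖aInner A x y‖ := by
    rw [aInner_conj hA x y, RCLike.norm_conj]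
  rw [hnn] at h2
  have hx := aNorm_nonneg (A := A) x
  have hy := aNorm_nonneg (A := A) y
  have hsq : ‖aInner A x y‖ ^ 2 ≤ (aNorm A x * aNorm A y) ^ 2 := by
    rw [mul_pow, aNorm_sq hA x, aNorm_sq hA y]
    calc ‖aInner A x y‖ ^ 2 = ‖aInner A x y‖ * ‖aInner A x y‖ := sq ..
      _ ≤ _ := h2
  exact (pow_le_pow_iff_left₀ (norm_nonneg _) (mul_nonneg hx hy) two_ne_zero).mp hsq

end basic

/-- `T'` is an `A`-adjoint of `T` (without the range condition). -/
def AdjRel (A T T' : H →L[ℂ] H) : Prop := A ∘L T' = adjoint T ∘L A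

section adj

variable {A T T' S S' : H →L[ℂ] H}

lemma AdjRel.apply (h : AdjRel A T T') (x : H) : A (T' x) = adjoint T (A x) :=
  DFunLike.congr_fun h x

lemma AdjRel.symm (hA : A.IsPositive) (h : AdjRel A T T') : AdjRel A T' T := by
  have := congrArg (fun B => ContinuousLinearMap.adjoint B) h
  simp only [adjoint_comp, adjoint_adjoint, hA.isSelfAdjoint.adjoint_eq] at this
  exact this.symm

lemma AdjRel.move (hA : A.IsPositive) (h : AdjRel A T T') (x y : H) :
    aInner A (T x) y = aInner A x (T' y) := by
  show (inner ℂ (A (T x)) y : ℂ) = inner ℂ (A x) (T' y)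
  rw [← adjoint_inner_left T', ← (h.symm hA).apply x]

lemma AdjRel.comp (h : AdjRel A T T') (h2 : AdjRel A S S') :
    AdjRel A (T ∘L S) (S' ∘L T') := by
  unfold AdjRel at *
  calc A ∘L (S' ∘L T') = (A ∘L S') ∘L T' := by rw [comp_assoc]
    _ = adjoint S ∘L (A ∘L T') := by rw [h2, comp_assoc]
    _ = (adjoint S ∘L adjoint T) ∘L A := by rw [h, comp_assoc]
    _ = adjoint (T ∘L S) ∘L A := by rw [adjoint_comp]

lemma AdjRel.add (h : AdjRel A T T') (h2 : AdjRel A S S') :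
    AdjRel A (T + S) (T' + S') := by
  ext x
  simp only [comp_apply, add_apply, map_add, h.apply x, h2.apply x]

lemma AdjRel.sub (h : AdjRel A T T') (h2 : AdjRel A S S') :
    AdjRel A (T - S) (T' - S') := by
  ext x
  simp only [comp_apply, sub_apply, map_sub, h.apply x, h2.apply x]

lemma AdjRel.smul (h : AdjRel A T T') (c : ℂ) :
    AdjRel A (c • T) ((starRingEnd ℂ c) • T') := by
  have hadj : adjoint (c • T) = (starRingEnd ℂ c) • adjoint T := by
    rw [← star_eq_adjoint, ← star_eq_adjoint, star_smul]
    rfl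
  ext x
  simp only [comp_apply, smul_apply, map_smul, h.apply x, hadj]

end adj

section alg

variable {A : H →L[ℂ] H}

lemma aInner_add_left (x y z : H) :
    aInner A (x + y) z = aInner A x z + aInner A y z := by
  unfold aInner; rw [map_add, inner_add_left]

lemma aInner_add_right (x y z : H) :
    aInner A x (y + z) = aInner A x y + aInner A x z := by
  unfold aInner; rw [inner_add_right]

lemma aInner_sub_left (x y z : H) :
    aInner A (x - y) z = aInner A x z - aInner A y z := by
  unfold aInner; rw [map_sub, inner_sub_left]

lemma aInner_sub_right (x y z : H) :
    aInner A x (y - z) = aInner A x y - aInner A x z := by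
  unfold aInner; rw [inner_sub_right]

lemma aInner_smul_left (c : ℂ) (x y : H) :
    aInner A (c • x) y = starRingEnd ℂ c * aInner A x y := by
  unfold aInner; rw [map_smul, inner_smul_left]

lemma aInner_smul_right (c : ℂ) (x y : H) :
    aInner A x (c • y) = c * aInner A x y := by
  unfold aInner; rw [inner_smul_right]

lemma aNorm_smul (hA : A.IsPositive) (c : ℂ) (x : H) :
    aNorm A (c • x) = ‖c‖ * aNorm A x := by
  unfold aNorm
  rw [aInner_smul_left, aInner_smul_right, ← mul_assoc, Complex.conj_mul',
    ← Complex.ofReal_pow, Complex.re_ofReal_mul, Real.sqrt_mul (sq_nonneg _),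
    Real.sqrt_sq (norm_nonneg c)]

lemma aNorm_zero_of (hA : A.IsPositive) {x : H} (hx : aNorm A x = 0) {T T' : H →L[ℂ] H}
    (h : AdjRel A T T') : aNorm A (T x) = 0 := by
  have hx0 : aNorm A x = 0 := hx
  have h1 : aNorm A (T x) ^ 2 ≤ 0 := by
    rw [aNorm_sq hA]
    calc (aInner A (T x) (T x)).re ≤ ‖aInner A (T x) (T x)‖ := by
          exact Complex.re_le_norm _
      _ = ‖aInner A x (T' (T x))‖ := by rw [h.move hA]
      _ ≤ aNorm A x * aNorm A (T' (T x)) := aInner_abs_le hA _ _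
      _ = 0 := by rw [hx0, zero_mul]
  have h2 := aNorm_nonneg (A := A) (T x)
  nlinarith

lemma aNorm_le_norm (hA : A.IsPositive) (y : H) :
    aNorm A y ≤ Real.sqrt ‖A‖ * ‖y‖ := by
  have h1 : aNorm A y ^ 2 ≤ ‖A‖ * ‖y‖ ^ 2 := by
    rw [aNorm_sq hA]
    calc (aInner A y y).re ≤ ‖aInner A y y‖ := by
          exact Complex.re_le_norm _
      _ = ‖(inner ℂ (A y) y : ℂ)‖ := by rfl
      _ ≤ ‖A y‖ * ‖y‖ := norm_inner_le_norm _ _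
      _ ≤ (‖A‖ * ‖y‖) * ‖y‖ := by
          have := A.le_opNorm y
          nlinarith [norm_nonneg y]
      _ = ‖A‖ * ‖y‖ ^ 2 := by ring
  calc aNorm A y = Real.sqrt (aNorm A y ^ 2) := (Real.sqrt_sq (aNorm_nonneg y)).symm
    _ ≤ Real.sqrt (‖A‖ * ‖y‖ ^ 2) := Real.sqrt_le_sqrt h1
    _ = Real.sqrt ‖A‖ * ‖y‖ := by
        rw [Real.sqrt_mul (norm_nonneg A), Real.sqrt_sq (norm_nonneg y)]

end alg

section bound

variable {A : H →L[ℂ] H}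

lemma AdjRel.pow {R : H →L[ℂ] H} (hR : AdjRel A R R) : ∀ n : ℕ, AdjRel A (R ^ n) (R ^ n)
  | 0 => by
      have h1 : ContinuousLinearMap.adjoint (1 : H →L[ℂ] H) = 1 := by
        rw [← star_eq_adjoint, star_one]
      unfold AdjRel
      rw [pow_zero, h1]
      ext x
      simp
  | (n + 1) => by
      have := (AdjRel.pow hR n).comp hR
      simp only [← mul_def] at this
      rwa [← pow_succ, ← pow_succ'] at this

lemma aNorm_zero (hA : A.IsPositive) : aNorm A (0 : H) = 0 := by
  unfold aNorm aInner
  simp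

lemma selfadj_unit_bound (hA : A.IsPositive) {R : H →L[ℂ] H} (hR : AdjRel A R R)
    {x : H} (hx : aNorm A x = 1) : aNorm A (R x) ≤ ‖R‖ := by
  by_cases hR0 : ‖R‖ = 0
  · have : R = 0 := norm_eq_zero.mp hR0
    subst this
    simp [aNorm_zero hA, hR0]
  have hRpos : 0 < ‖R‖ := lt_of_le_of_ne (norm_nonneg R) (Ne.symm hR0)
  have key : ∀ m : ℕ, aNorm A ((R ^ m) x) ^ 2 ≤ aNorm A ((R ^ m) ((R ^ m) x)) := by
    intro m
    rw [aNorm_sq hA]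
    calc (aInner A ((R ^ m) x) ((R ^ m) x)).re
        ≤ ‖aInner A ((R ^ m) x) ((R ^ m) x)‖ := by
          exact Complex.re_le_norm _
      _ = ‖aInner A x ((R ^ m) ((R ^ m) x))‖ := by rw [(hR.pow m).move hA]
      _ ≤ aNorm A x * aNorm A ((R ^ m) ((R ^ m) x)) := aInner_abs_le hA _ _
      _ = aNorm A ((R ^ m) ((R ^ m) x)) := by rw [hx, one_mul]
  set u : ℕ → ℝ := fun k => aNorm A ((R ^ (2 ^ k)) x) with hu
  have step : ∀ k, u k ^ 2 ≤ u (k + 1) := by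
    intro k
    have h1 := key (2 ^ k)
    have h2 : (R ^ (2 ^ k)) ((R ^ (2 ^ k)) x) = (R ^ (2 ^ (k + 1))) x := by
      rw [pow_succ, mul_two, pow_add, ContinuousLinearMap.mul_apply]
    rw [h2] at h1
    exact h1
  have chain : ∀ k, aNorm A (R x) ^ (2 ^ k) ≤ u k := by
    intro k
    induction k with
    | zero => simp [hu, pow_one]
    | succ k ih =>
        calc aNorm A (R x) ^ (2 ^ (k + 1)) = (aNorm A (R x) ^ (2 ^ k)) ^ 2 := by
              rw [← pow_mul, pow_succ]
          _ ≤ (u k) ^ 2 := by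
              apply pow_le_pow_left₀ (pow_nonneg (aNorm_nonneg _) _) ih
          _ ≤ u (k + 1) := step k
  set K : ℝ := Real.sqrt ‖A‖ * ‖x‖ with hK
  have ubound : ∀ k, u k ≤ K * ‖R‖ ^ (2 ^ k) := by
    intro k
    calc u k ≤ Real.sqrt ‖A‖ * ‖(R ^ (2 ^ k)) x‖ := aNorm_le_norm hA _
      _ ≤ Real.sqrt ‖A‖ * (‖R ^ (2 ^ k)‖ * ‖x‖) := by
          apply mul_le_mul_of_nonneg_left ((R ^ (2 ^ k)).le_opNorm x) (Real.sqrt_nonneg _)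
      _ ≤ Real.sqrt ‖A‖ * (‖R‖ ^ (2 ^ k) * ‖x‖) := by
          apply mul_le_mul_of_nonneg_left _ (Real.sqrt_nonneg _)
          apply mul_le_mul_of_nonneg_right _ (norm_nonneg x)
          exact norm_pow_le' R (Nat.pow_pos (by norm_num))
      _ = K * ‖R‖ ^ (2 ^ k) := by ring
  by_contra hcon
  push_neg at hcon
  set b := aNorm A (R x) with hb
  have ha1 : 1 < b / ‖R‖ := (one_lt_div hRpos).mpr hcon
  obtain ⟨n, hn⟩ := pow_unbounded_of_one_lt K ha1
  have h3 : (b / ‖R‖) ^ n ≤ (b / ‖R‖) ^ (2 ^ n) :=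
    pow_le_pow_right₀ ha1.le (Nat.le_of_lt Nat.lt_two_pow_self)
  have h4 : (b / ‖R‖) ^ (2 ^ n) ≤ K := by
    rw [div_pow, div_le_iff₀ (pow_pos hRpos _)]
    calc b ^ (2 ^ n) ≤ u n := chain n
      _ ≤ K * ‖R‖ ^ (2 ^ n) := ubound n
  linarith [lt_of_lt_of_le (lt_of_lt_of_le hn h3) h4]

lemma aNorm_unit_bound (hA : A.IsPositive) {T T' : H →L[ℂ] H} (h : AdjRel A T T')
    {x : H} (hx : aNorm A x = 1) : aNorm A (T x) ^ 2 ≤ ‖T' ∘L T‖ := by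
  have hRR : AdjRel A (T' ∘L T) (T' ∘L T) := (h.symm hA).comp h
  calc aNorm A (T x) ^ 2 = (aInner A (T x) (T x)).re := aNorm_sq hA _
    _ ≤ ‖aInner A (T x) (T x)‖ := by
        exact Complex.re_le_norm _
    _ = ‖aInner A x (T' (T x))‖ := by rw [h.move hA]
    _ ≤ aNorm A x * aNorm A (T' (T x)) := aInner_abs_le hA _ _
    _ = aNorm A ((T' ∘L T) x) := by rw [hx, one_mul, comp_apply]
    _ ≤ ‖T' ∘L T‖ := selfadj_unit_bound hA hRR hx

end bound

section selfadj

variable {A : H →L[ℂ] H}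

lemma aInner_parallelogram (x y : H) :
    aInner A (x + y) (x + y) + aInner A (x - y) (x - y)
      = 2 * aInner A x x + 2 * aInner A y y := by
  simp only [aInner_add_left, aInner_add_right, aInner_sub_left, aInner_sub_right]
  ring

lemma aNorm_parallelogram (hA : A.IsPositive) (x y : H) :
    aNorm A (x + y) ^ 2 + aNorm A (x - y) ^ 2 = 2 * aNorm A x ^ 2 + 2 * aNorm A y ^ 2 := by
  simp only [aNorm_sq hA]
  have := congrArg Complex.re (aInner_parallelogram (A := A) x y)
  simpa using this

lemma polar_identity (hA : A.IsPositive) {V : H →L[ℂ] H} (hV : AdjRel A V V) (x y : H) :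
    (aInner A (V (x + y)) (x + y)).re - (aInner A (V (x - y)) (x - y)).re
      = 4 * (aInner A (V x) y).re := by
  have hsym : aInner A (V y) x = starRingEnd ℂ (aInner A (V x) y) := by
    rw [hV.move hA y x, aInner_conj hA]
  have hexp : aInner A (V (x + y)) (x + y) - aInner A (V (x - y)) (x - y)
      = 2 * (aInner A (V x) y + aInner A (V y) x) := by
    simp only [map_add, map_sub, aInner_add_left, aInner_add_right,
      aInner_sub_left, aInner_sub_right]
    ring
  have := congrArg Complex.re hexp
  simp only [Complex.sub_re] at this
  rw [this, hsym]
  simp [Complex.add_re, Complex.conj_re]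
  ring

lemma selfadj_abs_inner_le (hA : A.IsPositive) {V : H →L[ℂ] H} (hV : AdjRel A V V)
    {M : ℝ} (hM : 0 ≤ M)
    (hw : ∀ z, ‖aInner A (V z) z‖ ≤ M * aNorm A z ^ 2) (x y : H) :
    ‖aInner A (V x) y‖ ≤ M * (aNorm A x * aNorm A y) := by
  by_cases hx0 : aNorm A x = 0
  · calc ‖aInner A (V x) y‖ ≤ aNorm A (V x) * aNorm A y := aInner_abs_le hA _ _
      _ = 0 := by rw [aNorm_zero_of hA hx0 hV, zero_mul]
      _ ≤ M * (aNorm A x * aNorm A y) :=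
          mul_nonneg hM (mul_nonneg (aNorm_nonneg _) (aNorm_nonneg _))
  by_cases hy0 : aNorm A y = 0
  · calc ‖aInner A (V x) y‖ ≤ aNorm A (V x) * aNorm A y := aInner_abs_le hA _ _
      _ = 0 := by rw [hy0, mul_zero]
      _ ≤ M * (aNorm A x * aNorm A y) :=
          mul_nonneg hM (mul_nonneg (aNorm_nonneg _) (aNorm_nonneg _))
  -- the real-part bound, for all pairs
  have hre : ∀ u v : H, (aInner A (V u) v).re ≤ (M / 2) * (aNorm A u ^ 2 + aNorm A v ^ 2) := by
    intro u v
    have h4 := polar_identity hA hV u v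
    have h1 : (aInner A (V (u + v)) (u + v)).re ≤ M * aNorm A (u + v) ^ 2 := by
      calc (aInner A (V (u + v)) (u + v)).re ≤ ‖aInner A (V (u + v)) (u + v)‖ := by
            exact Complex.re_le_norm _
        _ ≤ M * aNorm A (u + v) ^ 2 := hw _
    have h2 : -(M * aNorm A (u - v) ^ 2) ≤ (aInner A (V (u - v)) (u - v)).re := by
      have habs : |(aInner A (V (u - v)) (u - v)).re| ≤ M * aNorm A (u - v) ^ 2 :=
        le_trans (Complex.abs_re_le_norm _) (hw (u - v))
      have := neg_abs_le ((aInner A (V (u - v)) (u - v)).re)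
      linarith [abs_le.mp habs]
    have hpar := aNorm_parallelogram hA u v
    nlinarith
  -- phase adjustment
  set c := aInner A (V x) y with hc
  by_cases hc0 : c = 0
  · rw [hc0]
    simpa using mul_nonneg hM (mul_nonneg (aNorm_nonneg (A := A) x) (aNorm_nonneg (A := A) y))
  have habsc : ‖(↑‖c‖ / c : ℂ)‖ = 1 := by
    rw [norm_div, Complex.norm_real, Real.norm_eq_abs, abs_of_nonneg (norm_nonneg c), div_self]
    exact (norm_ne_zero_iff.mpr hc0)
  set y' := ((↑(‖c‖) / c : ℂ)) • y with hy'
  have hval : (aInner A (V x) y').re = ‖c‖ := by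
    rw [hy', aInner_smul_right, ← hc, div_mul_cancel₀]
    · simp
    · exact hc0
  have hpy' : aNorm A y' = aNorm A y := by
    rw [hy', aNorm_smul hA, habsc, one_mul]
  -- scaling
  have hscale : ∀ t : ℝ, 0 < t →
      ‖c‖ ≤ (M / 2) * (t ^ 2 * aNorm A x ^ 2 + t⁻¹ ^ 2 * aNorm A y ^ 2) := by
    intro t ht
    have heq : aInner A (V (((t : ℂ)) • x)) ((((t : ℝ)⁻¹ : ℝ) : ℂ) • y')
        = aInner A (V x) y' := by
      rw [map_smul, aInner_smul_left, aInner_smul_right, Complex.conj_ofReal]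
      rw [← mul_assoc, ← Complex.ofReal_mul, mul_inv_cancel₀ (ne_of_gt ht)]
      simp
    have := hre (((t : ℝ) : ℂ) • x) ((((t : ℝ)⁻¹ : ℝ) : ℂ) • y')
    rw [heq, hval] at this
    rw [aNorm_smul hA, aNorm_smul hA, hpy'] at this
    simpa [Complex.norm_real, Real.norm_eq_abs, abs_of_pos ht, abs_of_pos (inv_pos.mpr ht), mul_pow] using this
  have hpx : 0 < aNorm A x := lt_of_le_of_ne (aNorm_nonneg _) (Ne.symm hx0)
  have hpy : 0 < aNorm A y := lt_of_le_of_ne (aNorm_nonneg _) (Ne.symm hy0)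
  have ht : (0:ℝ) < Real.sqrt (aNorm A y / aNorm A x) := Real.sqrt_pos.mpr (by positivity)
  have := hscale _ ht
  rw [Real.sq_sqrt (le_of_lt (by positivity : (0:ℝ) < aNorm A y / aNorm A x))] at this
  have hinv : (Real.sqrt (aNorm A y / aNorm A x))⁻¹ ^ 2 = aNorm A x / aNorm A y := by
    rw [← Real.sqrt_inv, Real.sq_sqrt (by positivity)]
    rw [inv_div]
  rw [hinv] at this
  calc ‖c‖ ≤ (M / 2) * (aNorm A y / aNorm A x * aNorm A x ^ 2
        + aNorm A x / aNorm A y * aNorm A y ^ 2) := this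
    _ = M * (aNorm A x * aNorm A y) := by
        field_simp
        ring

lemma selfadj_norm_le (hA : A.IsPositive) {V : H →L[ℂ] H} (hV : AdjRel A V V)
    {M : ℝ} (hM : 0 ≤ M)
    (hw : ∀ z, ‖aInner A (V z) z‖ ≤ M * aNorm A z ^ 2) (x : H) :
    aNorm A (V x) ≤ M * aNorm A x := by
  have h1 : aNorm A (V x) ^ 2 ≤ M * (aNorm A x * aNorm A (V x)) := by
    rw [aNorm_sq hA]
    calc (aInner A (V x) (V x)).re ≤ ‖aInner A (V x) (V x)‖ := by
          exact Complex.re_le_norm _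
      _ ≤ M * (aNorm A x * aNorm A (V x)) := selfadj_abs_inner_le hA hV hM hw x (V x)
  by_cases hq : aNorm A (V x) = 0
  · rw [hq]
    exact mul_nonneg hM (aNorm_nonneg _)
  have hqpos : 0 < aNorm A (V x) := lt_of_le_of_ne (aNorm_nonneg _) (Ne.symm hq)
  nlinarith

end selfadj

section square

variable {A : H →L[ℂ] H}

lemma square_numerical_bound (hA : A.IsPositive) {V V' : H →L[ℂ] H} (hV : AdjRel A V V')
    {w : ℝ} (hw0 : 0 ≤ w)
    (hw : ∀ z, ‖aInner A (V z) z‖ ≤ w * aNorm A z ^ 2) (z : H) :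
    ‖aInner A (V (V z)) z‖ ≤ w ^ 2 * aNorm A z ^ 2 := by
  set c := aInner A (V (V z)) z with hc
  by_cases hc0 : c = 0
  · rw [hc0]
    simpa using mul_nonneg (sq_nonneg w) (sq_nonneg _)
  obtain ⟨μ, hμ⟩ := IsAlgClosed.exists_pow_nat_eq (c / (‖c‖ : ℂ)) (n := 2) (by norm_num)
  have habsc : ‖(c / (‖c‖ : ℂ))‖ = 1 := by
    rw [norm_div, Complex.norm_real, Real.norm_eq_abs, abs_of_nonneg (norm_nonneg c), div_self]
    exact (norm_ne_zero_iff.mpr hc0)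
  have habsμ : ‖μ‖ = 1 := by
    have h2 : ‖μ‖ ^ 2 = 1 := by
      rw [← norm_pow, hμ, habsc]
    nlinarith [norm_nonneg μ]
  set U : H →L[ℂ] H := μ • V with hU
  set U' : H →L[ℂ] H := (starRingEnd ℂ μ) • V' with hU'
  have hUadj : AdjRel A U U' := hV.smul μ
  have hUadj' : AdjRel A U' U := hUadj.symm hA
  -- the value of the rotated operator
  have hval : aInner A (U (U z)) z = (‖c‖ : ℂ) := by
    have hUU : U (U z) = (μ ^ 2) • (V (V z)) := by
      simp [hU, smul_smul, map_smul, sq]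
    rw [hUU, aInner_smul_left, ← hc, hμ]
    rw [map_div₀, Complex.conj_ofReal]
    rw [div_mul_eq_mul_div, mul_comm ((starRingEnd ℂ) c) c, Complex.mul_conj]
    rw [Complex.normSq_eq_norm_sq]
    push_cast
    rw [pow_two, mul_div_assoc, div_self (Complex.ofReal_ne_zero.mpr (norm_ne_zero_iff.mpr hc0)),
      mul_one]
  -- numerical bound for U
  have hwU : ∀ y, ‖aInner A (U y) y‖ ≤ w * aNorm A y ^ 2 := by
    intro y
    rw [hU]
    simp only [smul_apply]
    rw [aInner_smul_left, norm_mul]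
    rw [Complex.norm_conj, habsμ]
    simpa using hw y
  have hwU' : ∀ y, ‖aInner A (U' y) y‖ ≤ w * aNorm A y ^ 2 := by
    intro y
    have h1 : aInner A (U' y) y = starRingEnd ℂ (aInner A (U y) y) := by
      rw [hUadj'.move hA y y, aInner_conj hA]
    rw [h1, Complex.norm_conj]
    exact hwU y
  set P : H →L[ℂ] H := U + U' with hP
  have hPadj : AdjRel A P P := by
    have := hUadj.add hUadj'
    rwa [add_comm U' U] at this
  have hwP : ∀ y, ‖aInner A (P y) y‖ ≤ (2 * w) * aNorm A y ^ 2 := by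
    intro y
    rw [hP]
    simp only [add_apply]
    rw [aInner_add_left]
    calc ‖aInner A (U y) y + aInner A (U' y) y‖
        ≤ ‖aInner A (U y) y‖ + ‖aInner A (U' y) y‖ :=
          norm_add_le _ _
      _ ≤ w * aNorm A y ^ 2 + w * aNorm A y ^ 2 := add_le_add (hwU y) (hwU' y)
      _ = (2 * w) * aNorm A y ^ 2 := by ring
  have hPnorm : aNorm A (P z) ≤ (2 * w) * aNorm A z :=
    selfadj_norm_le hA hPadj (by linarith) hwP z
  set Q : H →L[ℂ] H := U - U' with hQ
  have hQadj : AdjRel A Q (U' - U) := hUadj.sub hUadj'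
  -- key identities
  have lemA : aInner A (P (P z)) z = aInner A (P z) (P z) := hPadj.move hA (P z) z
  have lemB : aInner A (Q (Q z)) z = - aInner A (Q z) (Q z) := by
    rw [hQadj.move hA (Q z) z]
    have : (U' - U) z = -(Q z) := by simp [hQ, sub_apply, neg_sub]
    rw [this]
    have := aInner_smul_right (A := A) (-1 : ℂ) (Q z) (Q z)
    simpa using this
  have lemC : P (P z) + Q (Q z) = (2 : ℂ) • (U (U z)) + (2 : ℂ) • (U' (U' z)) := by
    simp only [hP, hQ, add_apply, sub_apply, map_add, map_sub]
    module
  have lemD : aInner A (U' (U' z)) z = starRingEnd ℂ (aInner A (U (U z)) z) := by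
    rw [hUadj'.move hA (U' z) z, hUadj'.move hA z (U z), aInner_conj hA]
  have hE : aInner A (P (P z)) z + aInner A (Q (Q z)) z = (4 * ‖c‖ : ℝ) := by
    calc aInner A (P (P z)) z + aInner A (Q (Q z)) z
        = aInner A (P (P z) + Q (Q z)) z := (aInner_add_left _ _ _).symm
      _ = (2 : ℂ) * aInner A (U (U z)) z + (2 : ℂ) * aInner A (U' (U' z)) z := by
          rw [lemC, aInner_add_left, aInner_smul_left, aInner_smul_left]
          simp [map_ofNat]
      _ = (4 * ‖c‖ : ℝ) := by
          rw [lemD, hval]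
          rw [Complex.conj_ofReal]
          push_cast
          ring
  have hre : 4 * ‖c‖ = aNorm A (P z) ^ 2 - aNorm A (Q z) ^ 2 := by
    have := congrArg Complex.re hE
    rw [Complex.add_re, lemA, lemB] at this
    rw [aNorm_sq hA, aNorm_sq hA]
    simp only [Complex.neg_re] at this
    simpa [sub_eq_add_neg] using this.symm
  have hfinal : 4 * ‖c‖ ≤ (2 * w * aNorm A z) ^ 2 := by
    rw [hre]
    have h1 : aNorm A (P z) ^ 2 ≤ (2 * w * aNorm A z) ^ 2 := by
      apply pow_le_pow_left₀ (aNorm_nonneg _) hPnorm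
    nlinarith [sq_nonneg (aNorm A (Q z))]
  nlinarith [hfinal]

end square

section product

variable {A : H →L[ℂ] H}

private lemma opt_aux {r a b C : ℝ} (hr : 0 ≤ r) (ha : 0 ≤ a) (hb : 0 ≤ b) (hC : 0 ≤ C)
    (h : ∀ t : ℝ, 0 < t → r ≤ (t * a + t⁻¹ * b) ^ 2 / 2 * C) : r ≤ 2 * a * b * C := by
  rcases eq_or_lt_of_le ha with ha0 | hapos
  · -- a = 0
    subst ha0
    by_contra hcon
    push_neg at hcon
    simp only [mul_zero, zero_mul] at hcon
    have hrpos : 0 < r := hcon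
    set q : ℝ := b ^ 2 * C / (2 * r) with hq
    have hq0 : 0 ≤ q := by positivity
    set t : ℝ := Real.sqrt (q + 1) with ht
    have htpos : 0 < t := Real.sqrt_pos.mpr (by linarith)
    have ht2 : t ^ 2 = q + 1 := Real.sq_sqrt (by linarith)
    have hts := h t htpos
    have hineq : (t * 0 + t⁻¹ * b) ^ 2 / 2 * C = b ^ 2 * C / (2 * t ^ 2) := by
      ring
    rw [hineq, ht2] at hts
    have hb2 : b ^ 2 * C = q * (2 * r) := by
      rw [hq]
      field_simp
    rw [hb2, le_div_iff₀ (by positivity)] at hts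
    nlinarith [hts, hrpos, hq0]
  rcases eq_or_lt_of_le hb with hb0 | hbpos
  · -- b = 0
    subst hb0
    by_contra hcon
    push_neg at hcon
    simp only [mul_zero, zero_mul] at hcon
    have hrpos : 0 < r := hcon
    set q : ℝ := a ^ 2 * C / (2 * r) with hq
    have hq0 : 0 ≤ q := by positivity
    set t : ℝ := (Real.sqrt (q + 1))⁻¹ with ht
    have hsp : 0 < Real.sqrt (q + 1) := Real.sqrt_pos.mpr (by linarith)
    have htpos : 0 < t := inv_pos.mpr hsp
    have ht2 : t ^ 2 = (q + 1)⁻¹ := by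
      rw [ht, inv_pow, Real.sq_sqrt (by linarith)]
    have hts := h t htpos
    have hineq : (t * a + t⁻¹ * 0) ^ 2 / 2 * C = a ^ 2 * C * t ^ 2 / 2 := by
      ring
    rw [hineq, ht2] at hts
    have ha2 : a ^ 2 * C = q * (2 * r) := by
      rw [hq]
      field_simp
    rw [ha2] at hts
    have hts2 : r ≤ q * (2 * r) / (2 * (q + 1)) := by
      rw [div_eq_mul_inv, mul_inv]
      calc r ≤ q * (2 * r) * (q + 1)⁻¹ / 2 := hts
        _ = q * (2 * r) * (2⁻¹ * (q + 1)⁻¹) := by ring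
    rw [le_div_iff₀ (by positivity)] at hts2
    nlinarith [hts2, hrpos, hq0]
  -- both positive
  set t : ℝ := Real.sqrt (b / a) with ht
  have htpos : 0 < t := Real.sqrt_pos.mpr (by positivity)
  have ht0 : t ≠ 0 := ne_of_gt htpos
  have ht2 : t ^ 2 = b / a := Real.sq_sqrt (by positivity)
  have hti2 : t⁻¹ ^ 2 = a / b := by
    rw [inv_pow, ht2, inv_div]
  have hts := h t htpos
  have hexp : (t * a + t⁻¹ * b) ^ 2 = t ^ 2 * a ^ 2 + 2 * a * b + t⁻¹ ^ 2 * b ^ 2 := by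
    field_simp
    ring
  rw [hexp, ht2, hti2] at hts
  have heq : (b / a * a ^ 2 + 2 * a * b + a / b * b ^ 2) = 4 * (a * b) := by
    field_simp
    ring
  rw [heq] at hts
  calc r ≤ 4 * (a * b) / 2 * C := hts
    _ = 2 * a * b * C := by ring

lemma cabs_sub_le' (x y : ℂ) : ‖x - y‖ ≤ ‖x‖ + ‖y‖ := by
  exact norm_sub_le x y

lemma commuting_product_bound (hA : A.IsPositive) {T T' S S' : H →L[ℂ] H}
    (hT : AdjRel A T T') (hS : AdjRel A S S') (hcomm : T ∘L S = S ∘L T)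
    {a b : ℝ} (ha : 0 ≤ a) (hb : 0 ≤ b)
    (hwa : ∀ z, ‖aInner A (T z) z‖ ≤ a * aNorm A z ^ 2)
    (hwb : ∀ z, ‖aInner A (S z) z‖ ≤ b * aNorm A z ^ 2) (z : H) :
    ‖aInner A (T (S z)) z‖ ≤ 2 * a * b * aNorm A z ^ 2 := by
  have key : ∀ t : ℝ, 0 < t →
      ‖aInner A (T (S z)) z‖ ≤ (t * a + t⁻¹ * b) ^ 2 / 2 * aNorm A z ^ 2 := by
    intro t htp
    set X : H →L[ℂ] H := ((t : ℝ) : ℂ) • T with hX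
    set Y : H →L[ℂ] H := ((t⁻¹ : ℝ) : ℂ) • S with hY
    set X' : H →L[ℂ] H := ((t : ℝ) : ℂ) • T' with hX'
    set Y' : H →L[ℂ] H := ((t⁻¹ : ℝ) : ℂ) • S' with hY'
    have hXadj : AdjRel A X X' := by
      have := hT.smul ((t : ℝ) : ℂ)
      rwa [Complex.conj_ofReal] at this
    have hYadj : AdjRel A Y Y' := by
      have := hS.smul ((t⁻¹ : ℝ) : ℂ)
      rwa [Complex.conj_ofReal] at this
    have habsX : ∀ y, ‖aInner A (X y) y‖ ≤ (t * a) * aNorm A y ^ 2 := by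
      intro y
      rw [hX]
      simp only [smul_apply]
      rw [aInner_smul_left, norm_mul, Complex.norm_conj, Complex.norm_real, Real.norm_eq_abs, abs_of_pos htp]
      calc t * ‖aInner A (T y) y‖ ≤ t * (a * aNorm A y ^ 2) :=
            mul_le_mul_of_nonneg_left (hwa y) htp.le
        _ = (t * a) * aNorm A y ^ 2 := by ring
    have habsY : ∀ y, ‖aInner A (Y y) y‖ ≤ (t⁻¹ * b) * aNorm A y ^ 2 := by
      intro y
      rw [hY]
      simp only [smul_apply]
      rw [aInner_smul_left, norm_mul, Complex.norm_conj, Complex.norm_real, Real.norm_eq_abs,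
        abs_of_pos (inv_pos.mpr htp)]
      calc t⁻¹ * ‖aInner A (S y) y‖ ≤ t⁻¹ * (b * aNorm A y ^ 2) :=
            mul_le_mul_of_nonneg_left (hwb y) (inv_pos.mpr htp).le
        _ = (t⁻¹ * b) * aNorm A y ^ 2 := by ring
    set Vp : H →L[ℂ] H := X + Y with hVp
    set Vm : H →L[ℂ] H := X - Y with hVm
    have hVpadj : AdjRel A Vp (X' + Y') := hXadj.add hYadj
    have hVmadj : AdjRel A Vm (X' - Y') := hXadj.sub hYadj
    have habsVp : ∀ y, ‖aInner A (Vp y) y‖ ≤ (t * a + t⁻¹ * b) * aNorm A y ^ 2 := by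
      intro y
      rw [hVp]
      simp only [add_apply]
      rw [aInner_add_left]
      calc ‖aInner A (X y) y + aInner A (Y y) y‖
          ≤ ‖aInner A (X y) y‖ + ‖aInner A (Y y) y‖ :=
            norm_add_le _ _
        _ ≤ (t * a) * aNorm A y ^ 2 + (t⁻¹ * b) * aNorm A y ^ 2 :=
            add_le_add (habsX y) (habsY y)
        _ = (t * a + t⁻¹ * b) * aNorm A y ^ 2 := by ring
    have habsVm : ∀ y, ‖aInner A (Vm y) y‖ ≤ (t * a + t⁻¹ * b) * aNorm A y ^ 2 := by
      intro y
      rw [hVm]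
      simp only [sub_apply]
      rw [aInner_sub_left]
      calc ‖aInner A (X y) y - aInner A (Y y) y‖
          ≤ ‖aInner A (X y) y‖ + ‖aInner A (Y y) y‖ :=
            cabs_sub_le' _ _
        _ ≤ (t * a) * aNorm A y ^ 2 + (t⁻¹ * b) * aNorm A y ^ 2 :=
            add_le_add (habsX y) (habsY y)
        _ = (t * a + t⁻¹ * b) * aNorm A y ^ 2 := by ring
    have hwnn : 0 ≤ t * a + t⁻¹ * b := by positivity
    have hsqp := square_numerical_bound hA hVpadj hwnn habsVp z
    have hsqm := square_numerical_bound hA hVmadj hwnn habsVm z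
    -- the operator identity
    have hST : S (T z) = T (S z) := by
      have := DFunLike.congr_fun hcomm z
      simpa [comp_apply] using this.symm
    have hXY : X (Y z) = T (S z) := by
      rw [hX, hY]
      simp only [smul_apply, map_smul, smul_smul, ← Complex.ofReal_mul]
      first
        | rw [show t * t⁻¹ = 1 from mul_inv_cancel₀ (ne_of_gt htp)]
        | rw [show t⁻¹ * t = 1 from inv_mul_cancel₀ (ne_of_gt htp)]
      simp
    have hYX : Y (X z) = T (S z) := by
      rw [hX, hY]
      simp only [smul_apply, map_smul, smul_smul, ← Complex.ofReal_mul, hST]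
      first
        | rw [show t * t⁻¹ = 1 from mul_inv_cancel₀ (ne_of_gt htp)]
        | rw [show t⁻¹ * t = 1 from inv_mul_cancel₀ (ne_of_gt htp)]
      simp
    have hident : Vp (Vp z) - Vm (Vm z) = (4 : ℂ) • (T (S z)) := by
      simp only [hVp, hVm, add_apply, sub_apply, map_add, map_sub, hXY, hYX]
      module
    have hid2 : (4 : ℂ) * aInner A (T (S z)) z
        = aInner A (Vp (Vp z)) z - aInner A (Vm (Vm z)) z := by
      rw [← aInner_sub_left, hident, aInner_smul_left]
      simp [map_ofNat]
    have habs4 : 4 * ‖aInner A (T (S z)) z‖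
        ≤ 2 * ((t * a + t⁻¹ * b) ^ 2 * aNorm A z ^ 2) := by
      have h1 : ‖(4 : ℂ) * aInner A (T (S z)) z‖
          = 4 * ‖aInner A (T (S z)) z‖ := by
        rw [norm_mul]
        norm_num
      calc 4 * ‖aInner A (T (S z)) z‖
          = ‖aInner A (Vp (Vp z)) z - aInner A (Vm (Vm z)) z‖ := by
            rw [← h1, hid2]
        _ ≤ ‖aInner A (Vp (Vp z)) z‖ + ‖aInner A (Vm (Vm z)) z‖ :=
            cabs_sub_le' _ _
        _ ≤ (t * a + t⁻¹ * b) ^ 2 * aNorm A z ^ 2 + (t * a + t⁻¹ * b) ^ 2 * aNorm A z ^ 2 :=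
            add_le_add hsqp hsqm
        _ = 2 * ((t * a + t⁻¹ * b) ^ 2 * aNorm A z ^ 2) := by ring
    nlinarith [habs4]
  exact opt_aux (norm_nonneg _) ha hb (sq_nonneg _) key

end product

section assembly

variable {A : H →L[ℂ] H} {α : ℝ}

lemma alpha_set_bddAbove (hA : A.IsPositive) {T T' : H →L[ℂ] H} (h : AdjRel A T T')
    (hα : α ∈ Set.Ico (0:ℝ) 1) :
    BddAbove {r | ∃ x, aNorm A x = 1 ∧
      r = Real.sqrt (α * ‖aInner A (T x) x‖ ^ 2 + (1 - α) * aNorm A (T x) ^ 2)} := by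
  refine ⟨Real.sqrt ‖T' ∘L T‖, ?_⟩
  rintro r ⟨x, hx, rfl⟩
  apply Real.sqrt_le_sqrt
  have hc : ‖aInner A (T x) x‖ ≤ aNorm A (T x) := by
    calc ‖aInner A (T x) x‖ ≤ aNorm A (T x) * aNorm A x := aInner_abs_le hA _ _
      _ = aNorm A (T x) := by rw [hx, mul_one]
  have hd : aNorm A (T x) ^ 2 ≤ ‖T' ∘L T‖ := aNorm_unit_bound hA h hx
  have hc2 : ‖aInner A (T x) x‖ ^ 2 ≤ aNorm A (T x) ^ 2 :=
    pow_le_pow_left₀ (norm_nonneg _) hc 2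
  nlinarith [hα.1, hα.2, hc2, hd]

lemma alpha_elem_le (hA : A.IsPositive) {T T' : H →L[ℂ] H} (h : AdjRel A T T')
    (hα : α ∈ Set.Ico (0:ℝ) 1) {x : H} (hx : aNorm A x = 1) :
    Real.sqrt (α * ‖aInner A (T x) x‖ ^ 2 + (1 - α) * aNorm A (T x) ^ 2)
      ≤ alphaNorm A T α :=
  le_csSup (alpha_set_bddAbove hA h hα) ⟨x, hx, rfl⟩

lemma alphaNorm_nonneg' (hA : A.IsPositive) {T T' : H →L[ℂ] H} (h : AdjRel A T T')
    (hα : α ∈ Set.Ico (0:ℝ) 1) {x : H} (hx : aNorm A x = 1) :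
    0 ≤ alphaNorm A T α :=
  le_trans (Real.sqrt_nonneg _) (alpha_elem_le hA h hα hx)

lemma numradius_le_alphaNorm (hA : A.IsPositive) {T T' : H →L[ℂ] H} (h : AdjRel A T T')
    (hα : α ∈ Set.Ico (0:ℝ) 1) (z : H) :
    ‖aInner A (T z) z‖ ≤ alphaNorm A T α * aNorm A z ^ 2 := by
  by_cases hz : aNorm A z = 0
  · rw [hz]
    have : ‖aInner A (T z) z‖ ≤ aNorm A (T z) * aNorm A z := aInner_abs_le hA _ _
    rw [hz, mul_zero] at this
    simpa using this
  have hzpos : 0 < aNorm A z := lt_of_le_of_ne (aNorm_nonneg _) (Ne.symm hz)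
  set s : ℝ := (aNorm A z)⁻¹ with hs
  have hspos : 0 < s := inv_pos.mpr hzpos
  set z' : H := ((s : ℝ) : ℂ) • z with hz'
  have hz'1 : aNorm A z' = 1 := by
    rw [hz', aNorm_smul hA, Complex.norm_real, Real.norm_eq_abs, abs_of_pos hspos, hs,
      inv_mul_cancel₀ (ne_of_gt hzpos)]
  have habs : ‖aInner A (T z') z'‖ = s ^ 2 * ‖aInner A (T z) z‖ := by
    rw [hz', map_smul, aInner_smul_left, aInner_smul_right, Complex.conj_ofReal]
    rw [norm_mul, norm_mul, Complex.norm_real, Real.norm_eq_abs, abs_of_pos hspos]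
    ring
  have hcle : ‖aInner A (T z') z'‖ ≤ alphaNorm A T α := by
    have hcd : ‖aInner A (T z') z'‖ ≤ aNorm A (T z') := by
      calc ‖aInner A (T z') z'‖ ≤ aNorm A (T z') * aNorm A z' :=
            aInner_abs_le hA _ _
        _ = aNorm A (T z') := by rw [hz'1, mul_one]
    have h1 : ‖aInner A (T z') z'‖
        ≤ Real.sqrt (α * ‖aInner A (T z') z'‖ ^ 2
            + (1 - α) * aNorm A (T z') ^ 2) := by
      have hsq : ‖aInner A (T z') z'‖ ^ 2
          ≤ α * ‖aInner A (T z') z'‖ ^ 2 + (1 - α) * aNorm A (T z') ^ 2 := by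
        have := pow_le_pow_left₀ (norm_nonneg _) hcd 2
        nlinarith [hα.1, hα.2]
      calc ‖aInner A (T z') z'‖
          = Real.sqrt (‖aInner A (T z') z'‖ ^ 2) :=
            (Real.sqrt_sq (norm_nonneg _)).symm
        _ ≤ _ := Real.sqrt_le_sqrt hsq
    exact le_trans h1 (alpha_elem_le hA h hα hz'1)
  rw [habs] at hcle
  have hs2 : s ^ 2 * aNorm A z ^ 2 = 1 := by
    rw [hs]
    field_simp
  calc ‖aInner A (T z) z‖
      = (s ^ 2 * ‖aInner A (T z) z‖) * aNorm A z ^ 2 := by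
        rw [mul_comm (s ^ 2) (‖aInner A (T z) z‖), mul_assoc, hs2, mul_one]
    _ ≤ alphaNorm A T α * aNorm A z ^ 2 :=
        mul_le_mul_of_nonneg_right hcle (sq_nonneg _)

lemma seminorm_le_alphaNorm (hA : A.IsPositive) {T T' : H →L[ℂ] H} (h : AdjRel A T T')
    (hα : α ∈ Set.Ico (0:ℝ) 1) (z : H) :
    Real.sqrt (1 - α) * aNorm A (T z) ≤ alphaNorm A T α * aNorm A z := by
  by_cases hz : aNorm A z = 0
  · rw [hz, mul_zero, aNorm_zero_of hA hz h, mul_zero]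
  have hzpos : 0 < aNorm A z := lt_of_le_of_ne (aNorm_nonneg _) (Ne.symm hz)
  set s : ℝ := (aNorm A z)⁻¹ with hs
  have hspos : 0 < s := inv_pos.mpr hzpos
  set z' : H := ((s : ℝ) : ℂ) • z with hz'
  have hz'1 : aNorm A z' = 1 := by
    rw [hz', aNorm_smul hA, Complex.norm_real, Real.norm_eq_abs, abs_of_pos hspos, hs,
      inv_mul_cancel₀ (ne_of_gt hzpos)]
  have hTz' : aNorm A (T z') = s * aNorm A (T z) := by
    rw [hz', map_smul, aNorm_smul hA, Complex.norm_real, Real.norm_eq_abs, abs_of_pos hspos]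
  have h1 : Real.sqrt (1 - α) * aNorm A (T z') ≤ alphaNorm A T α := by
    have h2 : Real.sqrt ((1 - α) * aNorm A (T z') ^ 2)
        ≤ Real.sqrt (α * ‖aInner A (T z') z'‖ ^ 2
            + (1 - α) * aNorm A (T z') ^ 2) := by
      apply Real.sqrt_le_sqrt
      nlinarith [hα.1, sq_nonneg (‖aInner A (T z') z'‖)]
    have h3 : Real.sqrt ((1 - α) * aNorm A (T z') ^ 2)
        = Real.sqrt (1 - α) * aNorm A (T z') := by
      rw [Real.sqrt_mul (by linarith [hα.2] : (0:ℝ) ≤ 1 - α), Real.sqrt_sq (aNorm_nonneg _)]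
    rw [← h3]
    exact le_trans h2 (alpha_elem_le hA h hα hz'1)
  rw [hTz'] at h1
  have := mul_le_mul_of_nonneg_right h1 (le_of_lt hzpos)
  calc Real.sqrt (1 - α) * aNorm A (T z)
      = Real.sqrt (1 - α) * (s * aNorm A (T z)) * aNorm A z := by
        rw [hs]
        field_simp
    _ ≤ alphaNorm A T α * aNorm A z := this

end assembly

theorem stmt14 (A T S : H →L[ℂ] H) (hA : A.IsPositive)
    (hT : ∃ T', IsAAdjoint A T T') (hS : ∃ S', IsAAdjoint A S S')
    (hcomm : T ∘L S = S ∘L T) (α : ℝ) (hα : α ∈ Set.Ico (0:ℝ) 1) :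
    alphaNorm A (T ∘L S) α ≤
      Real.sqrt (4 * α + 1 / (1 - α)) * (alphaNorm A T α * alphaNorm A S α) := by
  obtain ⟨T', hT'⟩ := hT
  obtain ⟨S', hS'⟩ := hS
  have hTadj : AdjRel A T T' := hT'.1
  have hSadj : AdjRel A S S' := hS'.1
  have hα0 : 0 ≤ α := hα.1
  have hα1 : α < 1 := hα.2
  have h1α : 0 < 1 - α := by linarith
  have hconst : 0 ≤ 4 * α + 1 / (1 - α) := by positivity
  by_cases hex : ∃ x : H, aNorm A x = 1
  · obtain ⟨x₀, hx₀⟩ := hex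
    set NT := alphaNorm A T α with hNT
    set NS := alphaNorm A S α with hNS
    have hNT0 : 0 ≤ NT := alphaNorm_nonneg' hA hTadj hα hx₀
    have hNS0 : 0 ≤ NS := alphaNorm_nonneg' hA hSadj hα hx₀
    have hRHS0 : 0 ≤ Real.sqrt (4 * α + 1 / (1 - α)) * (NT * NS) :=
      mul_nonneg (Real.sqrt_nonneg _) (mul_nonneg hNT0 hNS0)
    apply Real.sSup_le _ hRHS0
    rintro r ⟨x, hx, rfl⟩
    have hTSx : (T ∘L S) x = T (S x) := rfl
    -- numerical radius part
    have hcx : ‖aInner A ((T ∘L S) x) x‖ ≤ 2 * NT * NS := by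
      rw [hTSx]
      have := commuting_product_bound hA hTadj hSadj hcomm hNT0 hNS0
        (numradius_le_alphaNorm hA hTadj hα) (numradius_le_alphaNorm hA hSadj hα) x
      rwa [hx, one_pow, mul_one] at this
    -- seminorm part
    have hdx : (1 - α) * aNorm A ((T ∘L S) x) ^ 2 ≤ NT ^ 2 * NS ^ 2 / (1 - α) := by
      rw [hTSx]
      have h1 : Real.sqrt (1 - α) * aNorm A (T (S x)) ≤ NT * aNorm A (S x) :=
        seminorm_le_alphaNorm hA hTadj hα (S x)
      have h2 : Real.sqrt (1 - α) * aNorm A (S x) ≤ NS := by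
        have := seminorm_le_alphaNorm hA hSadj hα x
        rwa [hx, mul_one] at this
      have hs1α : Real.sqrt (1 - α) ^ 2 = 1 - α := Real.sq_sqrt h1α.le
      have hq1 : (1 - α) * aNorm A (T (S x)) ^ 2 ≤ NT ^ 2 * aNorm A (S x) ^ 2 := by
        nlinarith [aNorm_nonneg (A := A) (T (S x)), aNorm_nonneg (A := A) (S x),
          mul_nonneg (Real.sqrt_nonneg (1 - α)) (aNorm_nonneg (A := A) (T (S x)))]
      have hq2 : (1 - α) * aNorm A (S x) ^ 2 ≤ NS ^ 2 := by
        nlinarith [aNorm_nonneg (A := A) (S x),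
          mul_nonneg (Real.sqrt_nonneg (1 - α)) (aNorm_nonneg (A := A) (S x))]
      rw [le_div_iff₀ h1α]
      nlinarith [sq_nonneg NT, aNorm_nonneg (A := A) (T (S x)), hq1, hq2,
        mul_le_mul_of_nonneg_left hq2 (sq_nonneg NT)]
    have hsum : α * ‖aInner A ((T ∘L S) x) x‖ ^ 2
        + (1 - α) * aNorm A ((T ∘L S) x) ^ 2
        ≤ (4 * α + 1 / (1 - α)) * (NT * NS) ^ 2 := by
      have hc2 : ‖aInner A ((T ∘L S) x) x‖ ^ 2 ≤ (2 * NT * NS) ^ 2 :=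
        pow_le_pow_left₀ (norm_nonneg _) hcx 2
      have hdiv : NT ^ 2 * NS ^ 2 / (1 - α) = 1 / (1 - α) * (NT * NS) ^ 2 := by
        field_simp
      calc α * ‖aInner A ((T ∘L S) x) x‖ ^ 2
            + (1 - α) * aNorm A ((T ∘L S) x) ^ 2
          ≤ α * (2 * NT * NS) ^ 2 + NT ^ 2 * NS ^ 2 / (1 - α) :=
            add_le_add (mul_le_mul_of_nonneg_left hc2 hα0) hdx
        _ = (4 * α + 1 / (1 - α)) * (NT * NS) ^ 2 := by
            rw [hdiv]
            ring
    calc Real.sqrt (α * ‖aInner A ((T ∘L S) x) x‖ ^ 2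
            + (1 - α) * aNorm A ((T ∘L S) x) ^ 2)
        ≤ Real.sqrt ((4 * α + 1 / (1 - α)) * (NT * NS) ^ 2) := Real.sqrt_le_sqrt hsum
      _ = Real.sqrt (4 * α + 1 / (1 - α)) * (NT * NS) := by
          rw [Real.sqrt_mul hconst, Real.sqrt_sq (mul_nonneg hNT0 hNS0)]
  · have hempty : ∀ U : H →L[ℂ] H, alphaNorm A U α = 0 := by
      intro U
      unfold alphaNorm
      convert Real.sSup_empty using 2
      ext r
      simp only [Set.mem_setOf_eq, Set.mem_empty_iff_false, iff_false]
      rintro ⟨x, hx, -⟩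
      exact hex ⟨x, hx⟩
    rw [hempty, hempty, hempty]
    simp
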